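/- If φ : F_k → F_k is a surjective homomorphism between free groups of the same finite rank k, then φ is an isomorphism. -/

import Mathlib

/-- Any partial injection on a finite type extends to a permutation. -/
lemma aux_exists_perm_extend {β : Type*} [Fintype β] [DecidableEq β] (s : Finset β) (f : β → β)
    (hf : Set.InjOn f ↑s) : ∃ σ : Equiv.Perm β, ∀ x ∈ s, σ x = f x := by
  have hcard : sᶜ.card = (s.image f)ᶜ.card := by
    rw [Finset.card_compl, Finset.card_compl, Finset.card_image_of_injOn hf]
  obtain ⟨e⟩ : Nonempty ({x // x ∈ sᶜ} ≃ {x // x ∈ (s.image f)ᶜ}) :=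
    ⟨Finset.equivOfCardEq hcard⟩
  set F : β → β := fun x =>
    if hx : x ∈ s then f x else (e ⟨x, Finset.mem_compl.2 hx⟩ : β) with hF
  have himg : ∀ a, a ∉ s → F a ∉ s.image f := by
    intro a ha
    simp only [hF, dif_neg ha]
    exact Finset.mem_compl.1 (e ⟨a, Finset.mem_compl.2 ha⟩).2
  have hinj : Function.Injective F := by
    intro a b hab
    by_cases ha : a ∈ s <;> by_cases hb : b ∈ s
    · simp only [hF, dif_pos ha, dif_pos hb] at hab
      exact hf ha hb hab
    · exfalso
      refine himg b hb ?_
      rw [← hab]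
      simp only [hF, dif_pos ha]
      exact Finset.mem_image_of_mem f ha
    · exfalso
      refine himg a ha ?_
      rw [hab]
      simp only [hF, dif_pos hb]
      exact Finset.mem_image_of_mem f hb
    · simp only [hF, dif_neg ha, dif_neg hb] at hab
      simpa using congrArg Subtype.val (e.injective (Subtype.ext hab))
  exact ⟨Equiv.ofBijective F (Finite.injective_iff_bijective.mp hinj),
    fun x hx => by simp [Equiv.ofBijective, hF, dif_pos hx]⟩

/-- Free groups over a decidable type are residually finite: every nontrivial element
survives in some finite symmetric group. -/
lemma aux_freeGroup_residually_finite {α : Type} [DecidableEq α]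
    (g : FreeGroup α) (hg : g ≠ 1) :
    ∃ (m : ℕ) (ψ : FreeGroup α →* Equiv.Perm (Fin m)), ψ g ≠ 1 := by
  classical
  set w : List (α × Bool) := g.toWord with hw
  set n : ℕ := w.length with hn
  -- the word `w` is reduced: no adjacent cancelling pair
  have hred : ∀ (i : ℕ) (h : i + 1 < n),
      ¬((w[i]'(by omega)).1 = (w[i+1]'h).1 ∧ (w[i+1]'h).2 = !(w[i]'(by omega)).2) := by
    rintro i h ⟨h1, h2⟩
    have hiw : i < w.length := by omega
    have e0 : FreeGroup.reduce w = w := FreeGroup.reduce_toWord g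
    have hpair : w[i+1]'h = ((w[i]'hiw).1, !(w[i]'hiw).2) := Prod.ext h1.symm h2
    have hsplit : FreeGroup.reduce w =
        w.take i ++ ((w[i]'hiw).1, (w[i]'hiw).2) ::
          ((w[i]'hiw).1, !(w[i]'hiw).2) :: w.drop (i+2) := by
      rw [e0]
      conv_lhs => rw [← List.take_append_drop i w]
      congr 1
      rw [List.drop_eq_getElem_cons hiw,
        List.drop_eq_getElem_cons (show i + 1 < w.length from h)]
      rw [hpair, Prod.mk.eta]
    exact FreeGroup.reduce.not hsplit
  -- the partial shift functions and their domains
  have hjlt : ∀ (j : ℕ) (p : α × Bool), w[j]? = some p → j < n :=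
    fun j p h => (List.getElem?_eq_some_iff.mp h).choose
  set f : α → Fin (n+1) → Fin (n+1) := fun a j =>
    if _ : w[(j:ℕ)-1]? = some (a, true) ∧ 0 < (j:ℕ) then ⟨(j:ℕ)-1, by omega⟩
    else if h2 : w[(j:ℕ)]? = some (a, false) then ⟨(j:ℕ)+1, by
      have := hjlt _ _ h2; omega⟩
    else j with hfdef
  set s : α → Finset (Fin (n+1)) := fun a =>
    Finset.univ.filter (fun j => (w[(j:ℕ)-1]? = some (a, true) ∧ 0 < (j:ℕ)) ∨
      w[(j:ℕ)]? = some (a, false)) with hsdef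
  have getlem : ∀ (a : α) (i : ℕ) (c : Bool), w[i]? = some (a, c) →
      ∃ h : i < n, w[i]'(by omega) = (a, c) := by
    intro a i c h
    have h' := List.getElem?_eq_some_iff.mp h
    exact ⟨h'.choose, h'.choose_spec⟩
  -- adjacent cancelling pairs contradict reducedness
  have pairred : ∀ (a : α) (c : Bool) (u : ℕ), w[u]? = some (a, c) →
      w[u+1]? = some (a, !c) → False := by
    intro a c u h1 h2
    obtain ⟨k1, e1⟩ := getlem _ _ _ h1
    obtain ⟨k2, e2⟩ := getlem _ _ _ h2
    refine hred u k2 ⟨?_, ?_⟩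
    · rw [e1, e2]
    · rw [e1, e2]
  have mixed : ∀ (a : α) (u v : ℕ), w[u-1]? = some (a, true) → 0 < u →
      w[v]? = some (a, false) → u - 1 = v + 1 → False := by
    rintro a u v hu hu0 hv huv
    have hu' : w[v+1]? = some (a, !false) := by rw [← huv]; exact hu
    exact pairred a false v hv hu' 
  have hfinj : ∀ a, Set.InjOn (f a) (s a) := by
    intro a x hx y hy hxy
    simp only [hsdef, Finset.coe_filter, Set.mem_setOf_eq, Finset.mem_univ, true_and] at hx hy
    by_cases hx1 : w[(x:ℕ)-1]? = some (a, true) ∧ 0 < (x:ℕ) <;>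
      by_cases hy1 : w[(y:ℕ)-1]? = some (a, true) ∧ 0 < (y:ℕ)
    · have ex : (f a x : ℕ) = (x:ℕ) - 1 := by simp only [hfdef, dif_pos hx1]
      have ey : (f a y : ℕ) = (y:ℕ) - 1 := by simp only [hfdef, dif_pos hy1]
      have h := ex ▸ ey ▸ congrArg (Fin.val) hxy
      exact Fin.ext (by omega)
    · have hy2 := hy.resolve_left hy1
      have ex : (f a x : ℕ) = (x:ℕ) - 1 := by simp only [hfdef, dif_pos hx1]
      have ey : (f a y : ℕ) = (y:ℕ) + 1 := by simp only [hfdef, dif_neg hy1, dif_pos hy2]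
      have h : (x:ℕ) - 1 = (y:ℕ) + 1 := by rw [← ex, ← ey, hxy]
      exact absurd h (fun h => mixed a x y hx1.1 hx1.2 hy2 h)
    · have hx2 := hx.resolve_left hx1
      have ex : (f a x : ℕ) = (x:ℕ) + 1 := by simp only [hfdef, dif_neg hx1, dif_pos hx2]
      have ey : (f a y : ℕ) = (y:ℕ) - 1 := by simp only [hfdef, dif_pos hy1]
      have h : (y:ℕ) - 1 = (x:ℕ) + 1 := by rw [← ex, ← ey, hxy]
      exact absurd h (fun h => mixed a y x hy1.1 hy1.2 hx2 h)
    · have hx2 := hx.resolve_left hx1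
      have hy2 := hy.resolve_left hy1
      have ex : (f a x : ℕ) = (x:ℕ) + 1 := by simp only [hfdef, dif_neg hx1, dif_pos hx2]
      have ey : (f a y : ℕ) = (y:ℕ) + 1 := by simp only [hfdef, dif_neg hy1, dif_pos hy2]
      have h : (x:ℕ) + 1 = (y:ℕ) + 1 := by rw [← ex, ← ey, hxy]
      exact Fin.ext (by omega)
  choose σ hσ using fun a => aux_exists_perm_extend (s a) (f a) (hfinj a)
  refine ⟨n + 1, FreeGroup.lift σ, ?_⟩
  have key : ∀ d : ℕ, d ≤ n →
      ((w.drop (n - d)).map (fun x => bif x.2 then σ x.1 else (σ x.1)⁻¹)).prod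
        ⟨n, Nat.lt_succ_self n⟩ = ⟨n - d, by omega⟩ := by
    intro d
    induction d with
    | zero =>
      intro _
      simp [List.drop_length, hn]
    | succ d ih =>
      intro hd
      set i := n - (d+1) with hi
      have hiw : i < w.length := by omega
      have hstep : w.drop i = (w[i]'hiw) :: w.drop (i+1) :=
        List.drop_eq_getElem_cons hiw
      rw [hstep]
      simp only [List.map_cons, List.prod_cons, Equiv.Perm.mul_apply]
      have hi1 : i + 1 = n - d := by omega
      rw [hi1, ih (by omega)]
      rcases hp : w[i]'hiw with ⟨a, b⟩
      have hwi? : w[i]? = some (a, b) := by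
        rw [List.getElem?_eq_getElem hiw, hp]
      have hnd : n - d = i + 1 := by omega
      cases b with
      | true =>
        -- σ a sends i+1 to i
        have hmem : (⟨n - d, by omega⟩ : Fin (n+1)) ∈ s a := by
          simp only [hsdef, Finset.mem_filter, Finset.mem_univ, true_and]
          left
          refine ⟨?_, by omega⟩
          simpa [hnd] using hwi?
        have := hσ a _ hmem
        simp only [cond_true]
        rw [this]
        have hc1 : w[((⟨n - d, by omega⟩ : Fin (n+1)):ℕ)-1]? = some (a, true) ∧
            0 < ((⟨n - d, by omega⟩ : Fin (n+1)):ℕ) := by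
          refine ⟨?_, by simp; omega⟩
          simpa [hnd] using hwi?
        simp only [hfdef, dif_pos hc1]
        exact Fin.ext (by simp; omega)
      | false =>
        -- σ a sends i to i+1, so its inverse sends i+1 to i
        simp only [cond_false]
        have hmem : (⟨i, by omega⟩ : Fin (n+1)) ∈ s a := by
          simp only [hsdef, Finset.mem_filter, Finset.mem_univ, true_and]
          right
          simpa using hwi?
        have hval : σ a ⟨i, by omega⟩ = ⟨n - d, by omega⟩ := by
          rw [hσ a _ hmem]
          have hc1 : ¬(w[((⟨i, by omega⟩ : Fin (n+1)):ℕ)-1]? = some (a, true) ∧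
              0 < ((⟨i, by omega⟩ : Fin (n+1)):ℕ)) := by
            rintro ⟨h1, h0⟩
            simp only at h1 h0
            have h2' : w[(i-1)+1]? = some (a, !true) := by
              rw [show (i-1)+1 = i by omega]
              simpa using hwi?
            exact pairred a true (i-1) h1 h2' 
          have hc2 : w[((⟨i, by omega⟩ : Fin (n+1)):ℕ)]? = some (a, false) := by
            simpa using hwi?
          simp only [hfdef, dif_neg hc1, dif_pos hc2]
          exact Fin.ext (by simp; omega)
        rw [← hval, Equiv.Perm.inv_def, Equiv.symm_apply_apply]
  intro h1
  have hwne : w ≠ [] := fun h => hg (FreeGroup.toWord_eq_nil_iff.mp (by rw [← hw]; exact h))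
  have hn0 : 0 < n := by rw [hn]; exact List.length_pos_iff.mpr hwne
  have h0 : (FreeGroup.lift σ) g ⟨n, Nat.lt_succ_self n⟩ = ⟨0, by omega⟩ := by
    conv_lhs => rw [← FreeGroup.mk_toWord (x := g)]
    rw [FreeGroup.lift_mk]
    have := key n le_rfl
    simpa [← hw] using this
  rw [h1] at h0
  simp only [Equiv.Perm.one_apply] at h0
  have := congrArg Fin.val h0
  simp at this
  omega

/-- A surjective homomorphism between free groups of the same finite rank is an isomorphism. -/
theorem freeGroup_surjective_endo_isomorphism (k : ℕ)
    (φ : FreeGroup (Fin k) →* FreeGroup (Fin k)) (hφ : Function.Surjective φ) :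
    ∃ e : FreeGroup (Fin k) ≃* FreeGroup (Fin k), (e : FreeGroup (Fin k) →* FreeGroup (Fin k)) = φ := by
  have hinj : Function.Injective φ := by
    rw [injective_iff_map_eq_one]
    intro g hg1
    by_contra hg
    obtain ⟨m, ψ, hψ⟩ := aux_freeGroup_residually_finite g hg
    have hfin : Finite (FreeGroup (Fin k) →* Equiv.Perm (Fin m)) :=
      Finite.of_surjective (FreeGroup.lift (β := Equiv.Perm (Fin m)))
        (Equiv.surjective _)
    have hci : Function.Injective
        (fun χ : FreeGroup (Fin k) →* Equiv.Perm (Fin m) => χ.comp φ) := by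
      intro χ₁ χ₂ h
      refine MonoidHom.ext fun x => ?_
      obtain ⟨y, rfl⟩ := hφ x
      exact DFunLike.congr_fun h y
    obtain ⟨χ, hχ⟩ := Finite.injective_iff_surjective.mp hci ψ
    have : ψ g = 1 := by
      rw [← hχ]
      simp [MonoidHom.comp_apply, hg1]
    exact hψ this
  exact ⟨MulEquiv.ofBijective φ ⟨hinj, hφ⟩, rfl⟩
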